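/- Let X ⊆ ℝⁿ be a nonempty closed convex set, let x ∈ X, let w₀, w₁ ∈ ℝⁿ, c ∈ ℝ, p > 0, α > 0, and suppose d* ∈ ℝⁿ with x + d* ∈ X minimizes the subproblem objective θ_{p,α}(d) := (1/p)⟨w₀, d⟩ + max{c + ⟨w₁, d⟩, 0} + (α/2)‖d‖² over the feasible set {d ∈ ℝⁿ : x + d ∈ X}. Then there exists λ ∈ [0,1] such that: (i) λ · min{c + ⟨w₁, d*⟩, 0} = 0 and (1 − λ) · max{c + ⟨w₁, d*⟩, 0} = 0; and (ii) for every u ∈ X, ⟨(1/p) w₀ + λ w₁ + α d*, u − (x + d*)⟩ ≥ 0. -/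

import Mathlib

open scoped RealInnerProductSpace

private lemma aux_limit (C K : ℝ) (hK : 0 ≤ K) (ε : ℝ) (hε : 0 < ε)
    (h : ∀ t : ℝ, 0 < t → t ≤ ε → 0 ≤ C + t * K) : 0 ≤ C := by
  by_contra hC
  push_neg at hC
  have ht0 : 0 < min ε (-C / (2 * (K + 1))) :=
    lt_min hε (div_pos (by linarith) (by linarith))
  have h1 := h _ ht0 (min_le_left _ _)
  have h2 : min ε (-C / (2 * (K + 1))) ≤ -C / (2 * (K + 1)) := min_le_right _ _
  have h3 : min ε (-C / (2 * (K + 1))) * K ≤ (-C / (2 * (K + 1))) * K :=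
    mul_le_mul_of_nonneg_right h2 hK
  have h4 : (-C / (2 * (K + 1))) * K ≤ -C / 2 := by
    rw [div_mul_eq_mul_div, div_le_div_iff₀ (by linarith) (by norm_num)]
    nlinarith
  linarith

private lemma helly_pairs (T : Set (ℝ × ℝ)) (hconv : Convex ℝ T)
    (h : ∀ q ∈ T, 0 ≤ q.1 + max q.2 0) :
    ∃ lam : ℝ, lam ∈ Set.Icc (0 : ℝ) 1 ∧ ∀ q ∈ T, 0 ≤ q.1 + lam * q.2 := by
  set S : Set ℝ := insert 0 {r | ∃ q ∈ T, 0 < q.2 ∧ r = -q.1 / q.2} with hS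
  have hub : ∀ r ∈ S, r ≤ 1 := by
    rintro r (rfl | ⟨q, hq, hq2, rfl⟩)
    · norm_num
    · have hq1 := h q hq
      rw [max_eq_left hq2.le] at hq1
      rw [div_le_one hq2]
      linarith
  have hbdd : BddAbove S := ⟨1, hub⟩
  have hne : S.Nonempty := ⟨0, Set.mem_insert _ _⟩
  refine ⟨sSup S, ⟨le_csSup hbdd (Set.mem_insert _ _), csSup_le hne hub⟩, ?_⟩
  intro q hq
  rcases lt_trichotomy q.2 0 with hneg | hzero | hpos
  · -- q.2 < 0 : show sSup S ≤ q.1 / (-q.2)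
    have hq1 : 0 ≤ q.1 := by
      have := h q hq
      rwa [max_eq_right hneg.le, add_zero] at this
    have hle : sSup S ≤ q.1 / (-q.2) := by
      apply csSup_le hne
      rintro r (rfl | ⟨q', hq', hq2', rfl⟩)
      · exact div_nonneg hq1 (by linarith)
      · rw [div_le_div_iff₀ hq2' (by linarith : (0:ℝ) < -q.2)]
        -- need : -q'.1 * -q.2 ≤ q.1 * q'.2
        set D : ℝ := q'.2 - q.2 with hD
        have hDpos : 0 < D := by simp [hD]; linarith
        have hμ0 : 0 ≤ q'.2 / D := le_of_lt (div_pos hq2' hDpos)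
        have hμ1 : 0 ≤ -q.2 / D := le_of_lt (div_pos (by linarith) hDpos)
        have hsum : q'.2 / D + -q.2 / D = 1 := by
          field_simp
          rw [hD]; ring
        have hw := hconv hq hq' hμ0 hμ1 hsum
        have hw2 := h _ hw
        have e1 : ((q'.2 / D) • q + (-q.2 / D) • q').2 = 0 := by
          simp only [Prod.smul_snd, Prod.snd_add, smul_eq_mul]
          field_simp
          ring
        have e2 : ((q'.2 / D) • q + (-q.2 / D) • q').1
            = (q'.2 / D) * q.1 + (-q.2 / D) * q'.1 := by
          simp [Prod.smul_fst, smul_eq_mul]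
        rw [e1, e2] at hw2
        simp only [max_self, add_zero] at hw2
        have hw3 : 0 ≤ q'.2 * q.1 + -q.2 * q'.1 := by
          have := mul_le_mul_of_nonneg_left hw2 hDpos.le
          rw [mul_zero] at this
          calc (0:ℝ) ≤ D * ((q'.2 / D) * q.1 + (-q.2 / D) * q'.1) := this
            _ = q'.2 * q.1 + -q.2 * q'.1 := by field_simp
        nlinarith
    have h5 : sSup S * (-q.2) ≤ (q.1 / (-q.2)) * (-q.2) :=
      mul_le_mul_of_nonneg_right hle (by linarith)
    rw [div_mul_cancel₀ _ (by linarith : (-q.2) ≠ 0)] at h5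
    nlinarith
  · have hq1 : 0 ≤ q.1 := by
      have := h q hq
      rwa [hzero, max_self, add_zero] at this
    rw [hzero]; linarith
  · have hmem : -q.1 / q.2 ∈ S := Set.mem_insert_iff.mpr (Or.inr ⟨q, hq, hpos, rfl⟩)
    have hle : -q.1 / q.2 ≤ sSup S := le_csSup hbdd hmem
    have h5 : (-q.1 / q.2) * q.2 ≤ sSup S * q.2 :=
      mul_le_mul_of_nonneg_right hle hpos.le
    rw [div_mul_cancel₀ _ (ne_of_gt hpos)] at h5
    linarith

/-- first-order optimality conditions for the strongly convex quadratic
subproblem `min_{d : x + d ∈ X} (1/p)⟨w₀, d⟩ + max{c + ⟨w₁, d⟩, 0} + (α/2)‖d‖²`: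
there is a multiplier `λ ∈ [0,1]` with the complementarity conditions
`λ·min{c + ⟨w₁, d*⟩, 0} = 0`, `(1−λ)·max{c + ⟨w₁, d*⟩, 0} = 0`, and the
variational inequality `⟨(1/p)w₀ + λw₁ + αd*, u − (x + d*)⟩ ≥ 0` for all `u ∈ X`. -/
theorem subproblem_kkt {n : ℕ} (X : Set (EuclideanSpace ℝ (Fin n)))
    (hXne : X.Nonempty) (hXcl : IsClosed X) (hXconv : Convex ℝ X)
    (x : EuclideanSpace ℝ (Fin n)) (hx : x ∈ X)
    (w₀ w₁ : EuclideanSpace ℝ (Fin n)) (c p α : ℝ) (hp : 0 < p) (hα : 0 < α)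
    (dstar : EuclideanSpace ℝ (Fin n)) (hdX : x + dstar ∈ X)
    (hmin : ∀ d : EuclideanSpace ℝ (Fin n), x + d ∈ X →
      (1 / p) * ⟪w₀, dstar⟫ + max (c + ⟪w₁, dstar⟫) 0 + (α / 2) * ‖dstar‖ ^ 2 ≤
      (1 / p) * ⟪w₀, d⟫ + max (c + ⟪w₁, d⟫) 0 + (α / 2) * ‖d‖ ^ 2) :
    ∃ lam : ℝ, lam ∈ Set.Icc (0 : ℝ) 1 ∧
      lam * min (c + ⟪w₁, dstar⟫) 0 = 0 ∧
      (1 - lam) * max (c + ⟪w₁, dstar⟫) 0 = 0 ∧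
      ∀ u ∈ X, 0 ≤ ⟪(1 / p) • w₀ + lam • w₁ + α • dstar, u - (x + dstar)⟫ := by
  set z : EuclideanSpace ℝ (Fin n) := x + dstar with hz
  set g : ℝ := c + ⟪w₁, dstar⟫ with hg
  -- key directional inequality
  have hkey : ∀ u ∈ X, ∀ t : ℝ, 0 < t → t ≤ 1 →
      0 ≤ t * ((1 / p) * ⟪w₀, u - z⟫ + α * ⟪dstar, u - z⟫)
        + (max (g + t * ⟪w₁, u - z⟫) 0 - max g 0)
        + t ^ 2 * ((α / 2) * ‖u - z‖ ^ 2) := by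
    intro u hu t ht0 ht1
    have hfeas : x + (dstar + t • (u - z)) ∈ X := by
      have hc := hXconv hdX hu (by linarith : (0:ℝ) ≤ 1 - t) ht0.le (by ring)
      convert hc using 1
      simp only [hz]
      module
    have hm := hmin _ hfeas
    have e0 : ⟪w₀, dstar + t • (u - z)⟫ = ⟪w₀, dstar⟫ + t * ⟪w₀, u - z⟫ := by
      rw [inner_add_right, real_inner_smul_right]
    have e1 : c + ⟪w₁, dstar + t • (u - z)⟫ = g + t * ⟪w₁, u - z⟫ := by
      rw [inner_add_right, real_inner_smul_right, hg]; ring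
    have e2 : ‖dstar + t • (u - z)‖ ^ 2
        = ‖dstar‖ ^ 2 + 2 * (t * ⟪dstar, u - z⟫) + t ^ 2 * ‖u - z‖ ^ 2 := by
      rw [norm_add_sq_real, real_inner_smul_right, norm_smul, mul_pow,
        Real.norm_eq_abs, sq_abs]
    rw [e0, e1, e2] at hm
    nlinarith [hm]
  -- helper : divide the key inequality by t
  have hdiv : ∀ u ∈ X, ∀ m : ℝ, ∀ ε : ℝ, 0 < ε →
      (∀ t : ℝ, 0 < t → t ≤ min ε 1 →
        max (g + t * ⟪w₁, u - z⟫) 0 - max g 0 = t * m) →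
      0 ≤ (1 / p) * ⟪w₀, u - z⟫ + α * ⟪dstar, u - z⟫ + m := by
    intro u hu m ε hε hmax
    apply aux_limit _ ((α / 2) * ‖u - z‖ ^ 2) (by positivity) (min ε 1)
      (lt_min hε one_pos)
    intro t ht0 htε
    have hk := hkey u hu t ht0 (le_trans htε (min_le_right _ _))
    rw [hmax t ht0 htε] at hk
    have hmul : 0 ≤ t * ((1 / p) * ⟪w₀, u - z⟫ + α * ⟪dstar, u - z⟫ + m
        + t * ((α / 2) * ‖u - z‖ ^ 2)) := by nlinarith [hk]
    nlinarith [hmul, ht0]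
  rcases lt_trichotomy g 0 with hgneg | hgzero | hgpos
  · -- g < 0 : lam = 0
    refine ⟨0, ⟨le_refl 0, zero_le_one⟩, by simp, ?_, ?_⟩
    · rw [max_eq_right hgneg.le]; ring
    · intro u hu
      have hB : (0:ℝ) < 1 + |⟪w₁, u - z⟫| := by positivity
      have key := hdiv u hu 0 ((-g) / (1 + |⟪w₁, u - z⟫|))
        (div_pos (by linarith) hB) ?_
      · have hrw : ⟪(1/p) • w₀ + (0:ℝ) • w₁ + α • dstar, u - (x + dstar)⟫
            = (1 / p) * ⟪w₀, u - z⟫ + α * ⟪dstar, u - z⟫ + 0 := by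
          simp only [← hz, inner_add_left, real_inner_smul_left, zero_smul,
            add_zero, zero_add]
        rw [hrw]; exact key
      · intro t ht0 htε
        have htg : t * (1 + |⟪w₁, u - z⟫|) ≤ -g :=
          (le_div_iff₀ hB).mp (le_trans htε (min_le_left _ _))
        have habs : t * ⟪w₁, u - z⟫ ≤ t * |⟪w₁, u - z⟫| :=
          mul_le_mul_of_nonneg_left (le_abs_self _) ht0.le
        have hle : g + t * ⟪w₁, u - z⟫ ≤ 0 := by nlinarith
        rw [max_eq_right hle, max_eq_right hgneg.le]; ring
  · -- g = 0 : use helly_pairs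
    set a : EuclideanSpace ℝ (Fin n) := (1/p) • w₀ + α • dstar with ha
    have hAa : ∀ v : EuclideanSpace ℝ (Fin n),
        ⟪a, v⟫ = (1 / p) * ⟪w₀, v⟫ + α * ⟪dstar, v⟫ := by
      intro v
      rw [ha, inner_add_left, real_inner_smul_left, real_inner_smul_left]
    set T : Set (ℝ × ℝ) :=
      (fun u : EuclideanSpace ℝ (Fin n) => ((⟪a, u - z⟫ : ℝ), (⟪w₁, u - z⟫ : ℝ))) '' X
      with hT
    have hTconv : Convex ℝ T := by
      rintro q ⟨u, hu, rfl⟩ q' ⟨u', hu', rfl⟩ s t hs ht hst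
      refine ⟨s • u + t • u', hXconv hu hu' hs ht hst, ?_⟩
      have hcomb : ∀ w : EuclideanSpace ℝ (Fin n),
          ⟪w, s • u + t • u' - z⟫ = s * ⟪w, u - z⟫ + t * ⟪w, u' - z⟫ := by
        intro w
        rw [inner_sub_right, inner_add_right, real_inner_smul_right,
          real_inner_smul_right, inner_sub_right, inner_sub_right]
        linear_combination (inner ℝ w z : ℝ) * hst
      simp only [Prod.ext_iff, Prod.smul_fst, Prod.smul_snd, Prod.fst_add,
        Prod.snd_add, smul_eq_mul]
      exact ⟨hcomb a, hcomb w₁⟩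
    have hTh : ∀ q ∈ T, 0 ≤ q.1 + max q.2 0 := by
      rintro q ⟨u, hu, rfl⟩
      simp only
      rcases le_or_gt 0 (⟪w₁, u - z⟫ : ℝ) with hB | hB
      · rw [max_eq_left hB, hAa]
        have key := hdiv u hu ⟪w₁, u - z⟫ 1 one_pos ?_
        · linarith
        · intro t ht0 htε
          rw [hgzero]
          rw [max_eq_left (by nlinarith : (0:ℝ) ≤ 0 + t * ⟪w₁, u - z⟫),
            max_self]
          ring
      · rw [max_eq_right hB.le, add_zero, hAa]
        have key := hdiv u hu 0 1 one_pos ?_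
        · linarith
        · intro t ht0 htε
          rw [hgzero]
          rw [max_eq_right (by nlinarith : (0:ℝ) + t * ⟪w₁, u - z⟫ ≤ 0),
            max_self]
          ring
    obtain ⟨lam, hlam01, hlamT⟩ := helly_pairs T hTconv hTh
    refine ⟨lam, hlam01, ?_, ?_, ?_⟩
    · rw [hgzero, min_self, mul_zero]
    · rw [hgzero, max_self, mul_zero]
    · intro u hu
      have hq := hlamT _ ⟨u, hu, rfl⟩
      simp only at hq
      have hrw : ⟪(1/p) • w₀ + lam • w₁ + α • dstar, u - (x + dstar)⟫
          = ⟪a, u - z⟫ + lam * ⟪w₁, u - z⟫ := by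
        simp only [← hz, ha, inner_add_left, real_inner_smul_left]
        ring
      rw [hrw]; exact hq
  · -- g > 0 : lam = 1
    refine ⟨1, ⟨zero_le_one, le_refl 1⟩, ?_, by simp, ?_⟩
    · rw [min_eq_right hgpos.le, mul_zero]
    · intro u hu
      have hB : (0:ℝ) < 1 + |⟪w₁, u - z⟫| := by positivity
      have key := hdiv u hu ⟪w₁, u - z⟫ (g / (1 + |⟪w₁, u - z⟫|))
        (div_pos hgpos hB) ?_
      · have hrw : ⟪(1/p) • w₀ + (1:ℝ) • w₁ + α • dstar, u - (x + dstar)⟫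
            = (1 / p) * ⟪w₀, u - z⟫ + α * ⟪dstar, u - z⟫ + ⟪w₁, u - z⟫ := by
          simp only [← hz, inner_add_left, real_inner_smul_left, one_smul]
          ring
        rw [hrw]; exact key
      · intro t ht0 htε
        have htg : t * (1 + |⟪w₁, u - z⟫|) ≤ g :=
          (le_div_iff₀ hB).mp (le_trans htε (min_le_left _ _))
        have habs : -(t * |⟪w₁, u - z⟫|) ≤ t * ⟪w₁, u - z⟫ := by
          have := mul_le_mul_of_nonneg_left (neg_abs_le (⟪w₁, u - z⟫ : ℝ)) ht0.le
          linarith [this]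
        have hle : (0:ℝ) ≤ g + t * ⟪w₁, u - z⟫ := by nlinarith
        rw [max_eq_left hle, max_eq_left hgpos.le]; ring
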